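/- arXiv:2007.07853 — 3 statements merged into one kernel-verified Lean document; each statement's English description precedes it below -/
import Mathlib

section
/- If S₁ and S₂ are both modular sets for output coordinate j of P, then S₁ ∩ S₂ is modular for j, provided the domain is all of Fin n → ℝ (a product space). Consequently, on a full product domain, the minimal modular set for each output coordinate is unique. -/
def Modular {n m : ℕ} (P : (Fin n → ℝ) → (Fin m → ℝ)) (j : Fin m) (S : Finset (Fin n)) : Prop :=
  ∀ x x' : Fin n → ℝ, (∀ i ∈ S, x i = x' i) → P x j = P x' j

theorem modular_inter_and_unique_minimal (n m : ℕ) (P : (Fin n → ℝ) → (Fin m → ℝ)) (j : Fin m) :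
    (∀ S₁ S₂ : Finset (Fin n), Modular P j S₁ → Modular P j S₂ → Modular P j (S₁ ∩ S₂)) ∧
    (∀ S S' : Finset (Fin n),
      (Modular P j S ∧ ∀ T ⊂ S, ¬ Modular P j T) →
      (Modular P j S' ∧ ∀ T ⊂ S', ¬ Modular P j T) → S = S') := by
  have hint : ∀ S₁ S₂ : Finset (Fin n), Modular P j S₁ → Modular P j S₂ →
      Modular P j (S₁ ∩ S₂) := by
    intro S₁ S₂ h₁ h₂ x x' hagree
    set y : Fin n → ℝ := fun i => if i ∈ S₁ then x i else x' i with hy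
    have e1 : P x j = P y j := by
      apply h₁
      intro i hi
      simp [hy, hi]
    have e2 : P y j = P x' j := by
      apply h₂
      intro i hi
      by_cases h : i ∈ S₁
      · simp only [hy, if_pos h]
        exact hagree i (Finset.mem_inter.mpr ⟨h, hi⟩)
      · simp [hy, h]
    exact e1.trans e2
  refine ⟨hint, ?_⟩
  intro S S' ⟨hS, hSmin⟩ ⟨hS', hS'min⟩
  have hI := hint S S' hS hS'
  have h1 : S ∩ S' = S := by
    by_contra h
    exact hSmin (S ∩ S') (lt_of_le_of_ne Finset.inter_subset_left h) hI
  have h2 : S ∩ S' = S' := by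
    by_contra h
    exact hS'min (S ∩ S') (lt_of_le_of_ne Finset.inter_subset_right h) hI
  rw [← h1, h2]
end

section
/- Uniqueness of the causal graph on full product domains: if P : (Fin n → ℝ) → (Fin m → ℝ) is defined on the entire product space, then for each j : Fin m there is exactly one minimal modular set S_j ⊆ Fin n, namely the intersection of all modular sets for j. -/
open Classical in
lemma modular_inter {n m : ℕ} (P : (Fin n → ℝ) → (Fin m → ℝ)) (j : Fin m)
    {S T : Finset (Fin n)} (hS : Modular P j S) (hT : Modular P j T) :
    Modular P j (S ∩ T) := by
  intro x x' hxx'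
  set y : Fin n → ℝ := fun i => if i ∈ S then x i else x' i with hy
  have h1 : P x j = P y j := by
    apply hS
    intro i hi
    simp [hy, hi]
  have h2 : P y j = P x' j := by
    apply hT
    intro i hi
    by_cases h : i ∈ S
    · have := hxx' i (Finset.mem_inter.2 ⟨h, hi⟩)
      simp [hy, h, this]
    · simp [hy, h]
  exact h1.trans h2

lemma modular_inf {n m : ℕ} (P : (Fin n → ℝ) → (Fin m → ℝ)) (j : Fin m)
    (F : Finset (Finset (Fin n))) (hF : ∀ T ∈ F, Modular P j T) :
    Modular P j (F.inf id) := by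
  induction F using Finset.induction_on with
  | empty =>
      intro x x' h
      have : x = x' := funext fun i => h i (by simp)
      rw [this]
  | @insert a s hnmem ih =>
      rw [Finset.inf_insert]
      exact modular_inter P j (hF a (by simp)) (ih fun T hT => hF T (by simp [hT]))

lemma mem_finset_inf {n : ℕ} (F : Finset (Finset (Fin n))) (i : Fin n) :
    i ∈ F.inf id ↔ ∀ T ∈ F, i ∈ T := by
  classical
  induction F using Finset.induction_on with
  | empty => simp [Finset.top_eq_univ]
  | insert _ _ hnmem ih => simp [Finset.inf_insert, ih]

theorem unique_minimal_modular (n m : ℕ) (P : (Fin n → ℝ) → (Fin m → ℝ)) (j : Fin m) :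
    ∃! S : Finset (Fin n),
      (Modular P j S ∧ ∀ T ⊂ S, ¬ Modular P j T) ∧
      (∀ i : Fin n, i ∈ S ↔ ∀ T : Finset (Fin n), Modular P j T → i ∈ T) := by
  classical
  set 𝒯 : Finset (Finset (Fin n)) := Finset.univ.filter (Modular P j) with h𝒯
  set S₀ : Finset (Fin n) := 𝒯.inf id with hS₀
  have hmem : ∀ i : Fin n, i ∈ S₀ ↔ ∀ T : Finset (Fin n), Modular P j T → i ∈ T := by
    intro i
    rw [hS₀, mem_finset_inf]
    constructor
    · intro h T hT; exact h T (by simp [h𝒯, hT])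
    · intro h T hT; exact h T (by simp [h𝒯] at hT; exact hT)
  have hmod : Modular P j S₀ := modular_inf P j 𝒯 (fun T hT => by simp [h𝒯] at hT; exact hT)
  refine ⟨S₀, ⟨⟨hmod, ?_⟩, hmem⟩, ?_⟩
  · intro T hT hTmod
    have : S₀ ⊆ T := fun i hi => (hmem i).1 hi T hTmod
    exact hT.not_subset this
  · intro S hS
    ext i
    rw [hS.2 i, hmem i]
end

section
/- Robustness to nuisance perturbations: suppose S is modular for output j under both P and P_θ, and suppose P_θ agrees with P on a set D ⊆ (Fin n → ℝ) whose projection to coordinates S is all of (S → ℝ). Then (P_θ x) j = (P x) j for all x : Fin n → ℝ (not just x ∈ D). -/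
theorem robustness_to_nuisance (n m : ℕ) (P Pθ : (Fin n → ℝ) → (Fin m → ℝ))
    (j : Fin m) (S : Finset (Fin n)) (D : Set (Fin n → ℝ))
    (hP : Modular P j S) (hPθ : Modular Pθ j S)
    (hagree : ∀ x ∈ D, Pθ x j = P x j)
    (hproj : ∀ v : {i : Fin n // i ∈ S} → ℝ, ∃ x ∈ D, ∀ i : {i : Fin n // i ∈ S}, x i.1 = v i) :
    ∀ x : Fin n → ℝ, Pθ x j = P x j := by
  intro x
  obtain ⟨y, hyD, hy⟩ := hproj (fun i => x i.1)
  have h : ∀ i ∈ S, x i = y i := fun i hi => (hy ⟨i, hi⟩).symm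
  calc Pθ x j = Pθ y j := hPθ x y h
    _ = P y j := hagree y hyD
    _ = P x j := hP y x (fun i hi => (h i hi).symm)
end
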